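/- (Squared-gradient normalization of the one-dimensional discrete heat kernel.) For t ≥ 0 and x ∈ ℤ let p_t(x) := (1/(2π))·∫_{−π}^{π} e^{t(cos k − 1)}·cos(kx) dk, and let ∇⁺f(x) := f(x+1) − f(x). Then Σ_{x ∈ ℤ} ∫_0^∞ (∇⁺p_t(x))² dt = 1. -/

import Mathlib

open MeasureTheory

/-- The transition probability of the continuous-time simple symmetric random walk on `ℤ`
with generator `½Δ`, given by its Fourier formula. -/
noncomputable def hk1 (t : ℝ) (x : ℤ) : ℝ :=
  (1 / (2 * Real.pi)) * ∫ k in Set.Icc (-Real.pi) Real.pi,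
    Real.exp (t * (Real.cos k - 1)) * Real.cos (k * (x : ℝ))

open AddCircle ContinuousMap Set intervalIntegral Real
open scoped Real

noncomputable section

instance fact2pi : Fact (0 < 2 * Real.pi) := ⟨by positivity⟩

/-- e^{t(cos k - 1)} (e^{-ik} - 1) as a continuous function on the circle. -/
def gker (t : ℝ) : C(AddCircle (2 * Real.pi), ℂ) :=
  ⟨fun z => (Real.exp (t * ((fourier 1 z).re - 1)) : ℂ) * ((fourier (-1) : C(AddCircle (2*Real.pi), ℂ)) z - 1), by
    refine Continuous.mul ?_ ?_
    · exact Complex.continuous_ofReal.comp (Real.continuous_exp.comp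
        (by fun_prop : Continuous fun z : AddCircle (2*Real.pi) =>
          t * ((fourier 1 z).re - 1)))
    · exact ((fourier (-1)).continuous).sub continuous_const⟩

lemma fourier_coe (n : ℤ) (x : ℝ) :
    fourier n (x : AddCircle (2 * Real.pi)) = Complex.exp (n * x * Complex.I) := by
  rw [fourier_coe_apply]
  congr 1
  have : (Real.pi : ℂ) ≠ 0 := by
    exact_mod_cast Real.pi_ne_zero
  field_simp
  push_cast; ring

lemma fourier_one_re (x : ℝ) : (fourier 1 (x : AddCircle (2 * Real.pi))).re = Real.cos x := by
  rw [fourier_coe]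
  push_cast
  rw [one_mul]
  exact Complex.exp_ofReal_mul_I_re x

lemma gker_coe (t x : ℝ) :
    gker t (x : AddCircle (2 * Real.pi)) =
      (Real.exp (t * (Real.cos x - 1)) : ℂ) * (Complex.exp (-(x * Complex.I)) - 1) := by
  show (Real.exp (t * ((fourier 1 (x : AddCircle (2*Real.pi))).re - 1)) : ℂ) * _ = _
  rw [fourier_one_re, fourier_coe]
  push_cast
  ring_nf

lemma integral_odd_pi {f : ℝ → ℝ} (hc : Continuous f) (ho : ∀ x, f (-x) = - f x) :
    ∫ x in (-Real.pi)..Real.pi, f x = 0 := by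
  have h1 : ∫ x in (-Real.pi)..(0:ℝ), f x = - ∫ x in (0:ℝ)..Real.pi, f x := by
    have := intervalIntegral.integral_comp_neg (a := (0:ℝ)) (b := Real.pi) (f := f)
    rw [neg_zero] at this
    rw [← this]
    simp_rw [ho]
    rw [intervalIntegral.integral_neg]
  have h2 : ∫ x in (-Real.pi)..Real.pi, f x =
      (∫ x in (-Real.pi)..(0:ℝ), f x) + ∫ x in (0:ℝ)..Real.pi, f x :=
    (intervalIntegral.integral_add_adjacent_intervals
      (hc.intervalIntegrable _ _) (hc.intervalIntegrable _ _)).symm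
  rw [h2, h1]; ring

/-- complexification: the imaginary part integrates to zero. -/
lemma complex_int (t : ℝ) (m : ℤ) :
    ∫ x in (-Real.pi)..Real.pi,
        (Real.exp (t * (Real.cos x - 1)) : ℂ) * Complex.exp (-(m * x * Complex.I)) =
      ((∫ x in (-Real.pi)..Real.pi,
        Real.exp (t * (Real.cos x - 1)) * Real.cos (x * m) : ℝ) : ℂ) := by
  have key : ∀ x : ℝ, (Real.exp (t * (Real.cos x - 1)) : ℂ) * Complex.exp (-(m * x * Complex.I))
      = ((Real.exp (t * (Real.cos x - 1)) * Real.cos (x * m) : ℝ) : ℂ)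
        + ((Real.exp (t * (Real.cos x - 1)) * Real.sin (x * m) : ℝ) : ℂ) * (-Complex.I) := by
    intro x
    have : -((m : ℂ) * x * Complex.I) = ((-(x * m) : ℝ) : ℂ) * Complex.I := by push_cast; ring
    rw [this, Complex.exp_mul_I]
    push_cast
    rw [Complex.cos_neg, Complex.sin_neg]
    ring
  simp_rw [key]
  rw [intervalIntegral.integral_add, intervalIntegral.integral_mul_const,
    intervalIntegral.integral_ofReal, intervalIntegral.integral_ofReal]
  · rw [integral_odd_pi (f := fun x => Real.exp (t * (Real.cos x - 1)) * Real.sin (x * m))]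
    · simp
    · fun_prop
    · intro x; rw [Real.cos_neg]; rw [show -x * m = -(x*m) by ring, Real.sin_neg]; ring
  · apply Continuous.intervalIntegrable; fun_prop
  · apply Continuous.intervalIntegrable
    apply Continuous.mul _ continuous_const
    have : Continuous fun x : ℝ => ((Real.exp (t * (Real.cos x - 1)) * Real.sin (x * m) : ℝ) : ℂ) := by
      fun_prop
    exact this

lemma hk1_eq (t : ℝ) (x : ℤ) :
    hk1 t x = (1 / (2 * Real.pi)) * ∫ k in (-Real.pi)..Real.pi,
      Real.exp (t * (Real.cos k - 1)) * Real.cos (k * (x : ℝ)) := by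
  rw [hk1, intervalIntegral.integral_of_le (by linarith [Real.pi_pos]),
    ← MeasureTheory.integral_Icc_eq_integral_Ioc]

lemma fourierCoeff_gker (t : ℝ) (n : ℤ) :
    fourierCoeff (⇑(gker t)) n = ((hk1 t (n+1) - hk1 t n : ℝ) : ℂ) := by
  rw [fourierCoeff_eq_intervalIntegral _ n (-Real.pi)]
  have hT : -Real.pi + 2 * Real.pi = Real.pi := by ring
  rw [hT]
  have key : ∀ x : ℝ, (fourier (-n) (x : AddCircle (2*Real.pi))) • gker t (x : AddCircle (2*Real.pi))
      = (Real.exp (t * (Real.cos x - 1)) : ℂ) * Complex.exp (-(((n+1 : ℤ) : ℂ) * x * Complex.I))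
        - (Real.exp (t * (Real.cos x - 1)) : ℂ) * Complex.exp (-((n : ℂ) * x * Complex.I)) := by
    intro x
    rw [smul_eq_mul, gker_coe, fourier_coe]
    rw [mul_comm, mul_assoc, mul_sub, sub_mul, ← Complex.exp_add, mul_one]
    push_cast
    rw [show -(↑x * Complex.I) + -↑n * ↑x * Complex.I = -((↑n + 1) * ↑x * Complex.I) by ring,
      show (-↑n : ℂ) * ↑x * Complex.I = -(↑n * ↑x * Complex.I) by ring, one_mul, mul_sub]
  simp_rw [key]
  rw [intervalIntegral.integral_sub]
  · rw [complex_int t (n+1), complex_int t n]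
    rw [hk1_eq, hk1_eq]
    push_cast
    rw [Complex.real_smul]
    push_cast
    ring
  · apply Continuous.intervalIntegrable
    have : Continuous fun x : ℝ => (Real.exp (t * (Real.cos x - 1)) : ℂ) := by fun_prop
    apply this.mul
    apply Complex.continuous_exp.comp
    fun_prop
  · apply Continuous.intervalIntegrable
    have : Continuous fun x : ℝ => (Real.exp (t * (Real.cos x - 1)) : ℂ) := by fun_prop
    apply this.mul
    apply Complex.continuous_exp.comp
    fun_prop

def gLp (t : ℝ) : Lp ℂ 2 (@haarAddCircle (2*Real.pi) fact2pi) :=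
  toLp (E := ℂ) 2 haarAddCircle ℂ (gker t)

lemma coeff_gLp (t : ℝ) (n : ℤ) :
    fourierCoeff (⇑(gLp t) : AddCircle (2*Real.pi) → ℂ) n = fourierCoeff (⇑(gker t)) n := by
  unfold fourierCoeff
  apply MeasureTheory.integral_congr_ae
  simp only [gLp]
  filter_upwards [ContinuousMap.coeFn_toLp (p := (2 : ENNReal)) haarAddCircle (𝕜 := ℂ) (gker t)]
    with z hz
  rw [hz]

lemma norm_sq_gker (t x : ℝ) :
    ‖gker t (x : AddCircle (2*Real.pi))‖^2
      = Real.exp (2*t*(Real.cos x - 1)) * (2 - 2*Real.cos x) := by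
  rw [gker_coe, norm_mul, mul_pow, Complex.norm_real, Real.norm_eq_abs,
    abs_of_pos (Real.exp_pos _), ← Real.exp_nat_mul]
  have h2 : ‖Complex.exp (-(x*Complex.I)) - 1‖^2 = 2 - 2*Real.cos x := by
    rw [Complex.sq_norm,
      show -(x*Complex.I) = ((-x : ℝ):ℂ) * Complex.I by push_cast; ring,
      Complex.exp_mul_I, ← Complex.ofReal_cos, ← Complex.ofReal_sin]
    simp [Complex.normSq_apply, Complex.cos_ofReal_re, Complex.sin_ofReal_re]
    nlinarith [Real.sin_sq_add_cos_sq x]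
  rw [h2]
  ring_nf

lemma parseval (t : ℝ) :
    Summable (fun x : ℤ => (hk1 t (x+1) - hk1 t x)^2) ∧
    ∑' x : ℤ, (hk1 t (x+1) - hk1 t x)^2
      = (1/(2*Real.pi)) * ∫ k in (-Real.pi)..Real.pi,
          Real.exp (2*t*(Real.cos k - 1)) * (2 - 2*Real.cos k) := by
  have hcoeff : ∀ n : ℤ, ‖fourierCoeff (⇑(gLp t) : AddCircle (2*Real.pi) → ℂ) n‖^2
      = (hk1 t (n+1) - hk1 t n)^2 := by
    intro n
    rw [coeff_gLp, fourierCoeff_gker, Complex.norm_real, Real.norm_eq_abs, sq_abs]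
  constructor
  · have hsum : Summable fun i : ℤ => ‖(fourierBasis (T := 2*Real.pi)).repr (gLp t) i‖ ^ ((2:ENNReal).toReal) :=
      (lp.memℓp ((fourierBasis (T := 2*Real.pi)).repr (gLp t))).summable (by norm_num)
    have : Summable fun i : ℤ => ‖fourierCoeff (⇑(gLp t) : AddCircle (2*Real.pi) → ℂ) i‖ ^ 2 := by
      refine hsum.congr fun i => ?_
      rw [fourierBasis_repr]
      norm_num
    exact this.congr fun i => hcoeff i
  · have hp := tsum_sq_fourierCoeff (gLp t)
    simp_rw [hcoeff] at hp
    rw [hp]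
    have hae : ∫ z, ‖(gLp t : AddCircle (2*Real.pi) → ℂ) z‖^2 ∂haarAddCircle
        = ∫ z, ‖gker t z‖^2 ∂haarAddCircle := by
      apply MeasureTheory.integral_congr_ae
      simp only [gLp]
      filter_upwards [ContinuousMap.coeFn_toLp (p := (2 : ENNReal)) haarAddCircle (𝕜 := ℂ) (gker t)]
        with z hz
      rw [hz]
    rw [hae]
    have hpre := AddCircle.intervalIntegral_preimage (2*Real.pi) (-Real.pi)
      (fun z => ‖gker t z‖^2)
    rw [show -Real.pi + 2*Real.pi = Real.pi by ring] at hpre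
    have hvol : ∫ z, ‖gker t z‖^2 ∂(volume : Measure (AddCircle (2*Real.pi)))
        = (2*Real.pi) * ∫ z, ‖gker t z‖^2 ∂haarAddCircle := by
      rw [AddCircle.volume_eq_smul_haarAddCircle, MeasureTheory.integral_smul_measure,
        ENNReal.toReal_ofReal (by positivity)]
      simp [smul_eq_mul]
    have : ∫ z, ‖gker t z‖^2 ∂(@haarAddCircle (2*Real.pi) fact2pi)
        = (1/(2*Real.pi)) * ∫ x in (-Real.pi)..Real.pi, ‖gker t (x : AddCircle (2*Real.pi))‖^2 := by
      rw [hpre, hvol]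
      field_simp
    rw [this]
    congr 1
    apply intervalIntegral.integral_congr
    intro x _
    exact norm_sq_gker t x

lemma hk1_cont (x : ℤ) : Continuous fun t => hk1 t x := by
  simp_rw [hk1_eq]
  apply Continuous.mul continuous_const
  rw [continuous_iff_continuousAt]
  intro t₀
  apply intervalIntegral.continuousAt_of_dominated_interval
    (bound := fun _ => Real.exp (2 * (|t₀| + 1)))
  · filter_upwards with t
    exact (Continuous.aestronglyMeasurable (by fun_prop))
  · filter_upwards [Metric.ball_mem_nhds t₀ one_pos] with t ht
    filter_upwards with k _
    have h1 : |t| ≤ |t₀| + 1 := by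
      have := abs_sub_abs_le_abs_sub t t₀
      have := mem_ball_iff_norm.mp ht
      simp only [Real.norm_eq_abs] at this
      linarith
    have h2 : |Real.cos k - 1| ≤ 2 := by
      have := Real.neg_one_le_cos k
      have := Real.cos_le_one k
      rw [abs_le]; constructor <;> linarith
    rw [Real.norm_eq_abs, abs_mul]
    calc |Real.exp (t * (Real.cos k - 1))| * |Real.cos (k * x)|
        ≤ Real.exp (t * (Real.cos k - 1)) * 1 := by
          rw [abs_of_pos (Real.exp_pos _)]
          exact mul_le_mul_of_nonneg_left (abs_cos_le_one _) (Real.exp_pos _).le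
      _ ≤ Real.exp (2 * (|t₀| + 1)) := by
          rw [mul_one, Real.exp_le_exp]
          calc t * (Real.cos k - 1) ≤ |t * (Real.cos k - 1)| := le_abs_self _
            _ = |t| * |Real.cos k - 1| := abs_mul _ _
            _ ≤ (|t₀| + 1) * 2 := by
                apply mul_le_mul h1 h2 (abs_nonneg _) (by positivity)
            _ = 2 * (|t₀| + 1) := by ring
  · exact intervalIntegrable_const
  · filter_upwards with k _
    fun_prop

lemma inner_t_integral {c : ℝ} (hc : 0 < c) :
    ∫⁻ t in Set.Ioi (0:ℝ), ENNReal.ofReal (Real.exp (-(c * t)) * c) = 1 := by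
  have hint : IntegrableOn (fun t => Real.exp (-(c * t)) * c) (Set.Ioi (0:ℝ)) := by
    have := exp_neg_integrableOn_Ioi 0 hc
    simpa [IntegrableOn] using this.mul_const c
  rw [← ofReal_integral_eq_lintegral_ofReal hint]
  · rw [MeasureTheory.integral_mul_const]
    have : ∫ t in Set.Ioi (0:ℝ), Real.exp (-(c * t)) = c⁻¹ := by
      have h := integral_comp_mul_left_Ioi (fun u => Real.exp (-u)) 0 hc
      rw [mul_zero] at h
      rw [h, integral_exp_neg_Ioi_zero, smul_eq_mul, mul_one]
    rw [this, inv_mul_cancel₀ hc.ne', ENNReal.ofReal_one]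
  · filter_upwards with t
    positivity

lemma master :
    ∑' x : ℤ, ∫⁻ t in Set.Ioi (0:ℝ), ENNReal.ofReal ((hk1 t (x+1) - hk1 t x)^2) = 1 := by
  have hmeas : ∀ x : ℤ, AEMeasurable (fun t : ℝ => ENNReal.ofReal ((hk1 t (x+1) - hk1 t x)^2))
      (volume.restrict (Set.Ioi 0)) := fun x =>
    (ENNReal.continuous_ofReal.comp (((hk1_cont (x+1)).sub (hk1_cont x)).pow 2)).aemeasurable
  rw [← MeasureTheory.lintegral_tsum hmeas]
  have hpt : ∀ t : ℝ, ∑' x : ℤ, ENNReal.ofReal ((hk1 t (x+1) - hk1 t x)^2)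
      = ENNReal.ofReal (1/(2*Real.pi)) *
        ∫⁻ k in Set.Ioc (-Real.pi) Real.pi,
          ENNReal.ofReal (Real.exp (2*t*(Real.cos k - 1)) * (2 - 2*Real.cos k)) := by
    intro t
    rw [← ENNReal.ofReal_tsum_of_nonneg (fun n => sq_nonneg _) (parseval t).1, (parseval t).2,
      ENNReal.ofReal_mul (by positivity)]
    congr 1
    rw [intervalIntegral.integral_of_le (by linarith [Real.pi_pos])]
    apply ofReal_integral_eq_lintegral_ofReal
    · apply Continuous.integrableOn_Ioc
      fun_prop
    · filter_upwards with k
      have h1 := Real.cos_le_one k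
      exact mul_nonneg (Real.exp_pos _).le (by linarith)
  simp_rw [hpt]
  rw [lintegral_const_mul' _ _ ENNReal.ofReal_ne_top]
  rw [lintegral_lintegral_swap (by
    apply (ENNReal.continuous_ofReal.comp (by fun_prop :
      Continuous fun p : ℝ × ℝ => Real.exp (2*p.1*(Real.cos p.2 - 1)) * (2 - 2*Real.cos p.2))).aemeasurable)]
  have hinner : ∀ᵐ k ∂(volume.restrict (Set.Ioc (-Real.pi) Real.pi)),
      (∫⁻ t in Set.Ioi (0:ℝ),
        ENNReal.ofReal (Real.exp (2*t*(Real.cos k - 1)) * (2 - 2*Real.cos k))) = 1 := by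
    have h0 : ∀ᵐ k : ℝ, k ≠ 0 := by
      rw [MeasureTheory.ae_iff]
      simp
    filter_upwards [ae_restrict_mem measurableSet_Ioc, ae_restrict_of_ae h0] with k hk hk0
    have hcos : Real.cos k < 1 := by
        rcases lt_or_eq_of_le (Real.cos_le_one k) with h | h
        · exact h
        · exfalso
          obtain ⟨n, hn⟩ := (Real.cos_eq_one_iff k).mp h
          rcases eq_or_ne n 0 with rfl | hn0
          · simp at hn; exact hk0 hn.symm
          · have h1 : (1:ℝ) ≤ |(n:ℝ)| := by
              rw [← Int.cast_abs]
              exact_mod_cast Int.one_le_abs hn0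
            have h2 : |k| ≤ Real.pi := by
              rw [abs_le]
              exact ⟨hk.1.le, hk.2⟩
            have h3 : |k| = |(n:ℝ)| * (2*Real.pi) := by
              rw [← hn, abs_mul, abs_of_pos (by positivity : (0:ℝ) < 2*Real.pi)]
            nlinarith [Real.pi_pos]
    have hc : 0 < 2 - 2*Real.cos k := by linarith
    have : ∀ t : ℝ, Real.exp (2*t*(Real.cos k - 1)) * (2 - 2*Real.cos k)
        = Real.exp (-((2 - 2*Real.cos k) * t)) * (2 - 2*Real.cos k) := by
      intro t; congr 2; ring
    simp_rw [this]
    exact inner_t_integral hc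
  rw [MeasureTheory.lintegral_congr_ae hinner, MeasureTheory.setLIntegral_one, Real.volume_Ioc]
  rw [← ENNReal.ofReal_mul (by positivity)]
  rw [show (1/(2*Real.pi)) * (Real.pi - -Real.pi) = 1 by field_simp; ring]
  exact ENNReal.ofReal_one

lemma integral_grad_sq_eq (x : ℤ) :
    ∫ t in Set.Ioi (0:ℝ), (hk1 t (x+1) - hk1 t x)^2
      = (∫⁻ t in Set.Ioi (0:ℝ), ENNReal.ofReal ((hk1 t (x+1) - hk1 t x)^2)).toReal := by
  apply MeasureTheory.integral_eq_lintegral_of_nonneg_ae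
  · filter_upwards with t; positivity
  · exact (((hk1_cont (x+1)).sub (hk1_cont x)).pow 2).aestronglyMeasurable

end

/-- Squared-gradient normalization: `Σ_x ∫_0^∞ (∇⁺p_t(x))² dt = 1`. -/
theorem stmt9 :
    ∑' x : ℤ, ∫ t in Set.Ioi (0:ℝ), (hk1 t (x+1) - hk1 t x)^2 = 1 := by
  have hM := master
  have hle : ∀ x : ℤ,
      (∫⁻ t in Set.Ioi (0:ℝ), ENNReal.ofReal ((hk1 t (x+1) - hk1 t x)^2)) ≠ ⊤ := by
    intro x
    refine ne_top_of_le_ne_top (by simp : (1:ENNReal) ≠ ⊤) ?_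
    rw [← hM]
    exact ENNReal.le_tsum x
  calc ∑' x : ℤ, ∫ t in Set.Ioi (0:ℝ), (hk1 t (x+1) - hk1 t x)^2
      = ∑' x : ℤ, (∫⁻ t in Set.Ioi (0:ℝ),
          ENNReal.ofReal ((hk1 t (x+1) - hk1 t x)^2)).toReal := tsum_congr integral_grad_sq_eq
    _ = (∑' x : ℤ, ∫⁻ t in Set.Ioi (0:ℝ),
          ENNReal.ofReal ((hk1 t (x+1) - hk1 t x)^2)).toReal := (ENNReal.tsum_toReal_eq hle).symm
    _ = 1 := by rw [hM]; simp
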